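/- arXiv:1704.01265 — 2 statements merged into one kernel-verified Lean document; each statement's English description precedes it below -/
import Mathlib

section
/- Let f : ℝ^{p×q} → ℝ, λ > 0, and let X* be a minimizer of X ↦ f(X) + λ‖X‖_*. Let X* = P* Σ* Q*ᵀ be its compact SVD and set U* = P* √Σ*, V* = Q* √Σ* (possibly padded with zero columns and rotated by an orthogonal matrix R). Then for all U ∈ ℝ^{p×r}, V ∈ ℝ^{q×r}: f(U*V*ᵀ) + (λ/2)(‖U*‖_F² + ‖V*‖_F²) ≤ f(UVᵀ) + (λ/2)(‖U‖_F² + ‖V‖_F²). -/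
open Matrix

set_option linter.unusedSectionVars false

noncomputable def singularValues {m n : Type*} [Fintype m] [Fintype n] [DecidableEq n]
    (X : Matrix m n ℝ) : n → ℝ :=
  fun i => Real.sqrt ((show (Xᵀ * X).IsHermitian by
    simpa using Matrix.isHermitian_conjTranspose_mul_self X).eigenvalues i)

noncomputable def nuclearNorm {m n : Type*} [Fintype m] [Fintype n] [DecidableEq n]
    (X : Matrix m n ℝ) : ℝ := ∑ i, singularValues X i

noncomputable def frobNorm {m n : Type*} [Fintype m] [Fintype n] (X : Matrix m n ℝ) : ℝ :=
  Real.sqrt ((Xᵀ * X).trace)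

section Helpers

variable {m n k' : Type*} [Fintype m] [Fintype n] [Fintype k'] [DecidableEq m] [DecidableEq n]
  [DecidableEq k']

lemma gram_diag_nonneg (M : Matrix m n ℝ) (i : n) : 0 ≤ (Mᵀ * M) i i := by
  rw [Matrix.mul_apply]
  exact Finset.sum_nonneg fun j _ => mul_self_nonneg _

lemma gram_trace_nonneg (M : Matrix m n ℝ) : 0 ≤ (Mᵀ * M).trace :=
  Finset.sum_nonneg fun i _ => gram_diag_nonneg M i

lemma frob_sq (M : Matrix m n ℝ) : frobNorm M ^ 2 = (Mᵀ * M).trace :=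
  Real.sq_sqrt (gram_trace_nonneg M)

lemma sv_nonneg (X : Matrix m n ℝ) (i : n) : 0 ≤ singularValues X i := Real.sqrt_nonneg _

lemma sv_sq (X : Matrix m n ℝ) (i : n) :
    singularValues X i ^ 2 = (show (Xᵀ * X).IsHermitian by
    simpa using Matrix.isHermitian_conjTranspose_mul_self X).eigenvalues i :=
  Real.sq_sqrt (Matrix.eigenvalues_conjTranspose_mul_self_nonneg X i)

/-- Diagonal entries shrink under conjugation by a symmetric idempotent. -/
lemma diag_conj_le (G : Matrix m m ℝ) (hGs : Gᵀ = G) (hGi : G * G = G)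
    (N : Matrix m n ℝ) (i : n) : (Nᵀ * G * N) i i ≤ (Nᵀ * N) i i := by
  have hC : (1 - G)ᵀ * (1 - G) = 1 - G := by
    rw [Matrix.transpose_sub, Matrix.transpose_one, hGs, Matrix.mul_sub, Matrix.mul_one,
      Matrix.sub_mul, Matrix.one_mul, hGi, sub_self, sub_zero]
  have h0 := gram_diag_nonneg ((1 - G) * N) i
  have he : ((1 - G) * N)ᵀ * ((1 - G) * N) = Nᵀ * N - Nᵀ * G * N := by
    calc ((1 - G) * N)ᵀ * ((1 - G) * N) = Nᵀ * ((1 - G)ᵀ * (1 - G)) * N := by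
          simp only [Matrix.transpose_mul, Matrix.mul_assoc]
      _ = Nᵀ * N - Nᵀ * G * N := by
          rw [hC, Matrix.mul_sub, Matrix.mul_one, Matrix.sub_mul]
  rw [he, Matrix.sub_apply] at h0
  linarith

lemma trace_conj_le (G : Matrix m m ℝ) (hGs : Gᵀ = G) (hGi : G * G = G)
    (N : Matrix m n ℝ) : (Nᵀ * G * N).trace ≤ (Nᵀ * N).trace :=
  Finset.sum_le_sum fun i _ => diag_conj_le G hGs hGi N i

/-- SVD-lite decomposition. -/
lemma svd_lite (X : Matrix m n ℝ) :
    ∃ (Z : Matrix n n ℝ) (W : Matrix m n ℝ),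
      Zᵀ * Z = 1 ∧ Z * Zᵀ = 1 ∧
      X = W * Matrix.diagonal (singularValues X) * Zᵀ ∧
      Wᵀ * X * Z = Matrix.diagonal (singularValues X) ∧
      Wᵀ * W = Matrix.diagonal (fun i => if singularValues X i = 0 then 0 else 1) := by
  have hA : (Xᵀ * X).IsHermitian := by
    simpa using Matrix.isHermitian_conjTranspose_mul_self X
  set σ := singularValues X with hσ
  set Z : Matrix n n ℝ := (hA.eigenvectorUnitary : Matrix n n ℝ) with hZ
  have hZ1 : Zᵀ * Z = 1 := by
    have := (Matrix.mem_unitaryGroup_iff').mp hA.eigenvectorUnitary.2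
    simpa [Matrix.star_eq_conjTranspose] using this
  have hZ2 : Z * Zᵀ = 1 := mul_eq_one_comm.mp hZ1
  have hspec : Xᵀ * X = Z * Matrix.diagonal hA.eigenvalues * Zᵀ := by
    have h := hA.spectral_theorem
    simp only [Unitary.conjStarAlgAut_apply, Matrix.star_eq_conjTranspose,
      Matrix.conjTranspose_eq_transpose_of_trivial, RCLike.ofReal_real_eq_id, Function.id_comp] at h
    convert h using 3
  set D : Matrix n n ℝ := Matrix.diagonal σ with hD
  have hDD : D * D = Matrix.diagonal hA.eigenvalues := by
    rw [hD, Matrix.diagonal_mul_diagonal]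
    refine congrArg Matrix.diagonal (funext fun i => ?_)
    rw [← sq]
    exact sv_sq X i
  set Dinv : Matrix n n ℝ := Matrix.diagonal (fun i => if σ i = 0 then 0 else (σ i)⁻¹)
    with hDinv
  have hDt : Dinvᵀ = Dinv := by rw [hDinv, Matrix.diagonal_transpose]
  set W : Matrix m n ℝ := X * Z * Dinv with hW
  have hkey : Zᵀ * (Xᵀ * X) * Z = D * D := by
    rw [hspec,
      show Zᵀ * (Z * Matrix.diagonal hA.eigenvalues * Zᵀ) * Z
          = (Zᵀ * Z) * Matrix.diagonal hA.eigenvalues * (Zᵀ * Z) by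
        simp only [Matrix.mul_assoc],
      hZ1, Matrix.one_mul, Matrix.mul_one, hDD]
  have hXZ : (X * Z)ᵀ * (X * Z) = D * D := by
    rw [← hkey]
    simp only [Matrix.transpose_mul, Matrix.mul_assoc]
  have hcol : ∀ i, σ i = 0 → ∀ a, (X * Z) a i = 0 := by
    intro i hi a
    have h := congrFun (congrFun hXZ i) i
    rw [hD, Matrix.diagonal_mul_diagonal, Matrix.diagonal_apply_eq] at h
    rw [hi, mul_zero, Matrix.mul_apply] at h
    simp only [Matrix.transpose_apply] at h
    exact mul_self_eq_zero.mp
      ((Finset.sum_eq_zero_iff_of_nonneg (fun b _ => mul_self_nonneg ((X * Z) b i))).mp h a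
        (Finset.mem_univ a))
  have hWD : W * D = X * Z := by
    rw [hW, Matrix.mul_assoc, hDinv, hD, Matrix.diagonal_mul_diagonal]
    ext a i
    rw [Matrix.mul_diagonal]
    by_cases hi : σ i = 0
    · simp [hi, hcol i hi a]
    · simp [hi, inv_mul_cancel₀ hi]
  refine ⟨Z, W, hZ1, hZ2, ?_, ?_, ?_⟩
  · rw [hWD, Matrix.mul_assoc, hZ2, Matrix.mul_one]
  · have h2 : Wᵀ * X * Z = Dinvᵀ * ((X * Z)ᵀ * (X * Z)) := by
      simp only [hW, Matrix.transpose_mul, Matrix.mul_assoc]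
    rw [h2, hXZ, hDt, hDinv, hD, Matrix.diagonal_mul_diagonal, Matrix.diagonal_mul_diagonal]
    refine congrArg Matrix.diagonal (funext fun i => ?_)
    by_cases hi : σ i = 0
    · simp [hi]
    · simp only [hi, if_false]
      rw [← mul_assoc, inv_mul_cancel₀ hi, one_mul]
  · have h3 : Wᵀ * W = Dinvᵀ * ((X * Z)ᵀ * (X * Z)) * Dinv := by
      simp only [hW, Matrix.transpose_mul, Matrix.mul_assoc]
    rw [h3, hXZ, hDt, hDinv, hD, Matrix.diagonal_mul_diagonal, Matrix.diagonal_mul_diagonal,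
      Matrix.diagonal_mul_diagonal]
    refine congrArg Matrix.diagonal (funext fun i => ?_)
    by_cases hi : σ i = 0
    · simp [hi]
    · simp only [hi, if_false]
      field_simp

end Helpers
section Claims

variable {m n k' r' : Type*} [Fintype m] [Fintype n] [Fintype k'] [Fintype r']
  [DecidableEq m] [DecidableEq n] [DecidableEq k'] [DecidableEq r']

/-- Claim B: `‖U Vᵀ‖_* ≤ (‖U‖_F² + ‖V‖_F²)/2` in trace form. -/
lemma nuclearNorm_mul_le (U : Matrix m k' ℝ) (V : Matrix n k' ℝ) :
    nuclearNorm (U * Vᵀ) ≤ ((Uᵀ * U).trace + (Vᵀ * V).trace) / 2 := by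
  obtain ⟨Z, W, hZ1, hZ2, hfact, hWXZ, hWW⟩ := svd_lite (U * Vᵀ)
  set σ := singularValues (U * Vᵀ) with hσ
  have hnn : nuclearNorm (U * Vᵀ) = (Wᵀ * (U * Vᵀ) * Z).trace := by
    rw [hWXZ, Matrix.trace_diagonal]
    rfl
  have h1 : Wᵀ * (U * Vᵀ) * Z = (Uᵀ * W)ᵀ * (Vᵀ * Z) := by
    simp only [Matrix.transpose_mul, Matrix.transpose_transpose, Matrix.mul_assoc]
  set A := Uᵀ * W with hA
  set B := Vᵀ * Z with hB
  have h2 : (Aᵀ * B).trace ≤ ((Aᵀ * A).trace + (Bᵀ * B).trace) / 2 := by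
    have h0 := gram_trace_nonneg (A - B)
    have he : (A - B)ᵀ * (A - B) = Aᵀ * A - Aᵀ * B - Bᵀ * A + Bᵀ * B := by
      rw [Matrix.transpose_sub, Matrix.sub_mul, Matrix.mul_sub, Matrix.mul_sub]
      abel
    have hsymm : (Bᵀ * A).trace = (Aᵀ * B).trace := by
      rw [← Matrix.trace_transpose (Bᵀ * A), Matrix.transpose_mul, Matrix.transpose_transpose]
    rw [he, Matrix.trace_add, Matrix.trace_sub, Matrix.trace_sub, hsymm] at h0
    linarith
  -- W * Wᵀ is a symmetric idempotent
  have hcolW : ∀ i, σ i = 0 → ∀ a, W a i = 0 := by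
    intro i hi a
    have h := congrFun (congrFun hWW i) i
    rw [Matrix.diagonal_apply_eq, if_pos hi, Matrix.mul_apply] at h
    simp only [Matrix.transpose_apply] at h
    exact mul_self_eq_zero.mp
      ((Finset.sum_eq_zero_iff_of_nonneg (fun b _ => mul_self_nonneg (W b i))).mp h a
        (Finset.mem_univ a))
  have hWdiag : W * Matrix.diagonal (fun i => if σ i = 0 then (0:ℝ) else 1) = W := by
    ext a i
    rw [Matrix.mul_diagonal]
    by_cases hi : σ i = 0
    · simp [hi, hcolW i hi a]
    · simp [hi]
  have hGs : (W * Wᵀ)ᵀ = W * Wᵀ := by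
    rw [Matrix.transpose_mul, Matrix.transpose_transpose]
  have hGi : (W * Wᵀ) * (W * Wᵀ) = W * Wᵀ := by
    rw [show (W * Wᵀ) * (W * Wᵀ) = W * (Wᵀ * W) * Wᵀ by simp only [Matrix.mul_assoc],
      hWW, hWdiag]
  have hAA : (Aᵀ * A).trace ≤ (Uᵀ * U).trace := by
    have e1 : (Aᵀ * A).trace = (Uᵀ * (W * Wᵀ) * U).trace := by
      rw [Matrix.trace_mul_comm]
      congr 1
      simp only [hA, Matrix.transpose_mul, Matrix.transpose_transpose, Matrix.mul_assoc]
    rw [e1]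
    exact trace_conj_le _ hGs hGi U
  have hBB : (Bᵀ * B).trace = (Vᵀ * V).trace := by
    have e1 : Bᵀ * B = Zᵀ * ((V * Vᵀ) * Z) := by
      simp only [hB, Matrix.transpose_mul, Matrix.transpose_transpose, Matrix.mul_assoc]
    rw [e1, Matrix.trace_mul_comm, Matrix.mul_assoc, hZ2, Matrix.mul_one,
      Matrix.trace_mul_comm]
  rw [hnn, h1]
  calc (Aᵀ * B).trace ≤ ((Aᵀ * A).trace + (Bᵀ * B).trace) / 2 := h2
    _ ≤ ((Uᵀ * U).trace + (Vᵀ * V).trace) / 2 := by rw [hBB]; linarith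

/-- Claim A: `tr S ≤ ‖P S Qᵀ‖_*` for semi-orthogonal `P, Q`. -/
lemma trace_le_nuclearNorm (P : Matrix m r' ℝ) (Q : Matrix n r' ℝ) (S : Matrix r' r' ℝ)
    (hP : Pᵀ * P = 1) (hQ : Qᵀ * Q = 1) : S.trace ≤ nuclearNorm (P * S * Qᵀ) := by
  set X := P * S * Qᵀ with hXdef
  obtain ⟨Z, W, hZ1, hZ2, hfact, hWXZ, hWW⟩ := svd_lite X
  set σ := singularValues X with hσ
  set G := (Zᵀ * Q) * (Pᵀ * W) with hG
  have hS : S = Pᵀ * X * Q := by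
    rw [show Pᵀ * X * Q = (Pᵀ * P) * (S * (Qᵀ * Q)) by rw [hXdef]; simp only [Matrix.mul_assoc],
      hP, hQ, Matrix.one_mul, Matrix.mul_one]
  have htr : S.trace = (Matrix.diagonal σ * G).trace := by
    rw [hS, hfact,
      show Pᵀ * (W * Matrix.diagonal σ * Zᵀ) * Q = (Pᵀ * W) * (Matrix.diagonal σ * (Zᵀ * Q)) by
        simp only [Matrix.mul_assoc],
      Matrix.trace_mul_comm]
    congr 1
    simp only [hG, Matrix.mul_assoc]
  -- diagonal entries of G are at most 1
  have hGle : ∀ i, G i i ≤ 1 := by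
    intro i
    have hQZ : ((Qᵀ * Z)ᵀ * (Qᵀ * Z)) i i ≤ 1 := by
      have h1 : (Qᵀ * Z)ᵀ * (Qᵀ * Z) = Zᵀ * (Q * Qᵀ) * Z := by
        simp only [Matrix.transpose_mul, Matrix.transpose_transpose, Matrix.mul_assoc]
      have h2 : (Zᵀ * (Q * Qᵀ) * Z) i i ≤ (Zᵀ * Z) i i := by
        refine diag_conj_le _ ?_ ?_ Z i
        · rw [Matrix.transpose_mul, Matrix.transpose_transpose]
        · rw [show (Q * Qᵀ) * (Q * Qᵀ) = Q * (Qᵀ * Q) * Qᵀ by simp only [Matrix.mul_assoc],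
            hQ, Matrix.mul_one]
      rw [h1]
      refine h2.trans ?_
      rw [hZ1, Matrix.one_apply_eq]
    have hPW : ((Pᵀ * W)ᵀ * (Pᵀ * W)) i i ≤ 1 := by
      have h1 : (Pᵀ * W)ᵀ * (Pᵀ * W) = Wᵀ * (P * Pᵀ) * W := by
        simp only [Matrix.transpose_mul, Matrix.transpose_transpose, Matrix.mul_assoc]
      have h2 : (Wᵀ * (P * Pᵀ) * W) i i ≤ (Wᵀ * W) i i := by
        refine diag_conj_le _ ?_ ?_ W i
        · rw [Matrix.transpose_mul, Matrix.transpose_transpose]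
        · rw [show (P * Pᵀ) * (P * Pᵀ) = P * (Pᵀ * P) * Pᵀ by simp only [Matrix.mul_assoc],
            hP, Matrix.mul_one]
      rw [h1]
      refine h2.trans ?_
      rw [hWW, Matrix.diagonal_apply_eq]
      by_cases hi : σ i = 0 <;> simp [hi]
    have hGii : G i i = ∑ j, (Qᵀ * Z) j i * (Pᵀ * W) j i := by
      rw [hG, Matrix.mul_apply]
      refine Finset.sum_congr rfl fun j _ => ?_
      congr 1
      rw [show (Qᵀ * Z) j i = ((Qᵀ * Z)ᵀ) i j from (Matrix.transpose_apply _ _ _).symm,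
        Matrix.transpose_mul, Matrix.transpose_transpose]
    have hsum1 : ∑ j, (Qᵀ * Z) j i * (Qᵀ * Z) j i ≤ 1 := by
      refine le_trans (le_of_eq ?_) hQZ
      rw [Matrix.mul_apply]
      simp only [Matrix.transpose_apply]
    have hsum2 : ∑ j, (Pᵀ * W) j i * (Pᵀ * W) j i ≤ 1 := by
      refine le_trans (le_of_eq ?_) hPW
      rw [Matrix.mul_apply]
      simp only [Matrix.transpose_apply]
    have hamgm : ∀ j : r', (Qᵀ * Z) j i * (Pᵀ * W) j i ≤
        ((Qᵀ * Z) j i * (Qᵀ * Z) j i + (Pᵀ * W) j i * (Pᵀ * W) j i) / 2 := by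
      intro j
      nlinarith [sq_nonneg ((Qᵀ * Z) j i - (Pᵀ * W) j i)]
    calc G i i = ∑ j, (Qᵀ * Z) j i * (Pᵀ * W) j i := hGii
      _ ≤ ∑ j, ((Qᵀ * Z) j i * (Qᵀ * Z) j i + (Pᵀ * W) j i * (Pᵀ * W) j i) / 2 :=
          Finset.sum_le_sum fun j _ => hamgm j
      _ ≤ 1 := by
          rw [← Finset.sum_div, Finset.sum_add_distrib]
          linarith
  rw [htr]
  have : nuclearNorm X = ∑ i, σ i := rfl
  rw [this]
  refine le_trans (le_of_eq rfl) ?_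
  rw [Matrix.trace]
  refine Finset.sum_le_sum fun i _ => ?_
  rw [Matrix.diag, Matrix.diagonal_mul]
  exact mul_le_of_le_one_right (sv_nonneg X i) (hGle i)

end Claims
noncomputable def spectralNorm' {m n : Type*} [Fintype m] [Fintype n] [DecidableEq m] [DecidableEq n]
    (X : Matrix m n ℝ) : ℝ :=
  ‖LinearMap.toContinuousLinearMap (Matrix.toEuclideanLin X)‖

noncomputable def smallestNonzeroSV {m n : Type*} [Fintype m] [Fintype n] [DecidableEq n]
    (X : Matrix m n ℝ) : ℝ :=
  sInf {s | (∃ i, singularValues X i = s) ∧ s ≠ 0}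

noncomputable def distO {n r : ℕ} (W₁ W₂ : Matrix (Fin n) (Fin r) ℝ) : ℝ :=
  sInf {d | ∃ R : Matrix (Fin r) (Fin r) ℝ, Rᵀ * R = 1 ∧ d = frobNorm (W₁ - W₂ * R)}

attribute [local instance] Matrix.normedAddCommGroup Matrix.normedSpace

theorem stmt7 {p q r k : ℕ} (f : Matrix (Fin p) (Fin q) ℝ → ℝ) (l : ℝ) (hl : 0 < l)
    (Xs : Matrix (Fin p) (Fin q) ℝ)
    (hopt : ∀ Y, f Xs + l * nuclearNorm Xs ≤ f Y + l * nuclearNorm Y)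
    (P : Matrix (Fin p) (Fin r) ℝ) (Q : Matrix (Fin q) (Fin r) ℝ)
    (S : Matrix (Fin r) (Fin r) ℝ)
    (hP : Pᵀ * P = 1) (hQ : Qᵀ * Q = 1)
    (hdiag : ∀ i j, i ≠ j → S i j = 0) (hpos : ∀ i, 0 < S i i)
    (hX : Xs = P * S * Qᵀ)
    (R : Matrix (Fin r ⊕ Fin k) (Fin r ⊕ Fin k) ℝ) (hR : Rᵀ * R = 1) :
    ∀ (U : Matrix (Fin p) (Fin r ⊕ Fin k) ℝ) (V : Matrix (Fin q) (Fin r ⊕ Fin k) ℝ),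
      f ((P * fromCols (S.map Real.sqrt) (0 : Matrix (Fin r) (Fin k) ℝ) * R) * (Q * fromCols (S.map Real.sqrt) (0 : Matrix (Fin r) (Fin k) ℝ) * R)ᵀ)
        + l / 2 * (frobNorm (P * fromCols (S.map Real.sqrt) (0 : Matrix (Fin r) (Fin k) ℝ) * R) ^ 2
            + frobNorm (Q * fromCols (S.map Real.sqrt) (0 : Matrix (Fin r) (Fin k) ℝ) * R) ^ 2)
      ≤ f (U * Vᵀ) + l / 2 * (frobNorm U ^ 2 + frobNorm V ^ 2) := by
  intro U V
  set F : Matrix (Fin r) (Fin r ⊕ Fin k) ℝ := fromCols (S.map Real.sqrt) 0 with hF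
  have hRR : R * Rᵀ = 1 := mul_eq_one_comm.mp hR
  -- S as a diagonal matrix
  have hSd : S = Matrix.diagonal (fun i => S i i) := by
    ext i j
    by_cases h : i = j
    · subst h; rw [Matrix.diagonal_apply_eq]
    · rw [Matrix.diagonal_apply_ne _ h, hdiag i j h]
  have hmap : S.map Real.sqrt = Matrix.diagonal (fun i => Real.sqrt (S i i)) := by
    conv_lhs => rw [hSd]
    rw [Matrix.diagonal_map Real.sqrt_zero]
  have hFF : F * Fᵀ = S := by
    rw [hF, Matrix.transpose_fromCols, Matrix.fromCols_mul_fromRows,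
      Matrix.transpose_zero, Matrix.mul_zero, add_zero, hmap,
      Matrix.diagonal_transpose, Matrix.diagonal_mul_diagonal]
    conv_rhs => rw [hSd]
    refine congrArg Matrix.diagonal (funext fun i => ?_)
    exact Real.mul_self_sqrt (hpos i).le
  -- the factored point multiplies back to Xs
  have hprod : (P * F * R) * (Q * F * R)ᵀ = Xs := by
    rw [show (P * F * R) * (Q * F * R)ᵀ = P * (F * ((R * Rᵀ) * (Fᵀ * Qᵀ))) by
        simp only [Matrix.transpose_mul, Matrix.mul_assoc],
      hRR, Matrix.one_mul, show F * (Fᵀ * Qᵀ) = (F * Fᵀ) * Qᵀ by rw [Matrix.mul_assoc],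
      hFF, ← Matrix.mul_assoc, hX]
  -- Frobenius norms of the factored point
  have htrP : frobNorm (P * F * R) ^ 2 = S.trace := by
    calc frobNorm (P * F * R) ^ 2 = ((P * F * R)ᵀ * (P * F * R)).trace := frob_sq _
      _ = (Rᵀ * ((Fᵀ * F) * R)).trace := by
          rw [show (P * F * R)ᵀ * (P * F * R) = Rᵀ * ((Fᵀ * ((Pᵀ * P) * F)) * R) by
              simp only [Matrix.transpose_mul, Matrix.mul_assoc], hP, Matrix.one_mul]
      _ = ((Fᵀ * F) * (R * Rᵀ)).trace := by rw [Matrix.trace_mul_comm, Matrix.mul_assoc]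
      _ = (Fᵀ * F).trace := by rw [hRR, Matrix.mul_one]
      _ = (F * Fᵀ).trace := Matrix.trace_mul_comm _ _
      _ = S.trace := by rw [hFF]
  have htrQ : frobNorm (Q * F * R) ^ 2 = S.trace := by
    calc frobNorm (Q * F * R) ^ 2 = ((Q * F * R)ᵀ * (Q * F * R)).trace := frob_sq _
      _ = (Rᵀ * ((Fᵀ * F) * R)).trace := by
          rw [show (Q * F * R)ᵀ * (Q * F * R) = Rᵀ * ((Fᵀ * ((Qᵀ * Q) * F)) * R) by
              simp only [Matrix.transpose_mul, Matrix.mul_assoc], hQ, Matrix.one_mul]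
      _ = ((Fᵀ * F) * (R * Rᵀ)).trace := by rw [Matrix.trace_mul_comm, Matrix.mul_assoc]
      _ = (Fᵀ * F).trace := by rw [hRR, Matrix.mul_one]
      _ = (F * Fᵀ).trace := Matrix.trace_mul_comm _ _
      _ = S.trace := by rw [hFF]
  have key1 : S.trace ≤ nuclearNorm Xs := by
    rw [hX]; exact trace_le_nuclearNorm P Q S hP hQ
  have key2 : nuclearNorm (U * Vᵀ) ≤ ((Uᵀ * U).trace + (Vᵀ * V).trace) / 2 :=
    nuclearNorm_mul_le U V
  have h := hopt (U * Vᵀ)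
  have k1 : l * S.trace ≤ l * nuclearNorm Xs := mul_le_mul_of_nonneg_left key1 hl.le
  have k2 : l * nuclearNorm (U * Vᵀ) ≤ l * (((Uᵀ * U).trace + (Vᵀ * V).trace) / 2) :=
    mul_le_mul_of_nonneg_left key2 hl.le
  rw [hprod, htrP, htrQ, frob_sq U, frob_sq V]
  linarith
end

section
/- For matrices W₁, W₂ ∈ ℝ^{n×r} with rank(W₁) = r: ‖W₁W₁ᵀ − W₂W₂ᵀ‖_F ≥ 2(√2 − 1) σ_r(W₁) dist(W₁, W₂), where σ_r(W₁) is the smallest singular value of W₁ and dist(W₁,W₂) = min_{R ∈ O(r)} ‖W₁ − W₂R‖_F. -/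
open Matrix

noncomputable def matSpectralNorm {m n : Type*} [Fintype m] [Fintype n] [DecidableEq m] [DecidableEq n]
    (X : Matrix m n ℝ) : ℝ :=
  ‖LinearMap.toContinuousLinearMap (Matrix.toEuclideanLin X)‖

attribute [local instance] Matrix.normedAddCommGroup Matrix.normedSpace

section AuxLemmas

open Matrix

lemma tr_tmul_nonneg {m k : Type*} [Fintype m] [Fintype k]
    (X : Matrix m k ℝ) : 0 ≤ (Xᵀ * X).trace := by
  simp only [Matrix.trace, Matrix.diag, Matrix.mul_apply, Matrix.transpose_apply]
  exact Finset.sum_nonneg fun j _ => Finset.sum_nonneg fun i _ => mul_self_nonneg _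

lemma tr_CS {m k : Type*} [Fintype m] [Fintype k] (X Y : Matrix m k ℝ) :
    (Xᵀ * Y).trace ≤ Real.sqrt (Xᵀ * X).trace * Real.sqrt (Yᵀ * Y).trace := by
  have e : ∀ Z W : Matrix m k ℝ, (Zᵀ * W).trace = ∑ p : k × m, Z p.2 p.1 * W p.2 p.1 := by
    intro Z W
    rw [Fintype.sum_prod_type]
    simp only [Matrix.trace, Matrix.diag, Matrix.mul_apply, Matrix.transpose_apply]
  rw [e, e, e]
  have := Real.sum_mul_le_sqrt_mul_sqrt (Finset.univ) (fun p : k × m => X p.2 p.1)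
      (fun p : k × m => Y p.2 p.1)
  simpa [pow_two] using this

lemma psd_trace_nonneg {r : ℕ} {M N : Matrix (Fin r) (Fin r) ℝ}
    (hM : M.PosSemidef) (hN : N.PosSemidef) : 0 ≤ (M * N).trace := by
  obtain ⟨m, v, rfl⟩ := Matrix.posSemidef_iff_eq_sum_vecMulVec.mp hM
  rw [Finset.sum_mul, Matrix.trace_sum]
  refine Finset.sum_nonneg fun i _ => ?_
  rw [Matrix.trace_mul_comm]
  have : (N * vecMulVec (v i) (star (v i))).trace = star (v i) ⬝ᵥ (N *ᵥ v i) := by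
    simp only [Matrix.trace, Matrix.diag, Matrix.mul_apply, vecMulVec_apply, dotProduct, mulVec,
      Finset.mul_sum]
    exact Finset.sum_congr rfl fun i _ => Finset.sum_congr rfl fun k _ => by ring
  rw [this]
  exact hN.dotProduct_mulVec_nonneg _

lemma vecMulVec_transpose' {r : ℕ} (u v : Fin r → ℝ) :
    (vecMulVec u v)ᵀ = vecMulVec v u := by
  ext i j; simp [vecMulVec_apply, mul_comm]

lemma vecMulVec_mul_vecMulVec' {r : ℕ} (a b c d : Fin r → ℝ) :
    vecMulVec a b * vecMulVec c d = (b ⬝ᵥ c) • vecMulVec a d := by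
  ext i j
  simp only [Matrix.mul_apply, vecMulVec_apply, Matrix.smul_apply, dotProduct, smul_eq_mul,
    Finset.sum_mul]
  exact Finset.sum_congr rfl fun k _ => by ring

lemma trace_mul_vecMulVec' {r : ℕ} (N : Matrix (Fin r) (Fin r) ℝ) (a b : Fin r → ℝ) :
    (N * vecMulVec a b).trace = b ⬝ᵥ (N *ᵥ a) := by
  simp only [Matrix.trace, Matrix.diag, Matrix.mul_apply, vecMulVec_apply, dotProduct, mulVec,
    Finset.mul_sum]
  exact Finset.sum_congr rfl fun i _ => Finset.sum_congr rfl fun k _ => by ring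

lemma householder_orth {r : ℕ} (v : Fin r → ℝ) (hv : v ≠ 0) :
    (1 - (2 * (v ⬝ᵥ v)⁻¹) • vecMulVec v v)ᵀ * (1 - (2 * (v ⬝ᵥ v)⁻¹) • vecMulVec v v) = 1 := by
  have hvv : v ⬝ᵥ v ≠ 0 := fun h => hv (dotProduct_self_eq_zero.mp h)
  set c := (2 * (v ⬝ᵥ v)⁻¹) with hc
  have ht : (1 - c • vecMulVec v v)ᵀ = 1 - c • vecMulVec v v := by
    rw [Matrix.transpose_sub, Matrix.transpose_one, Matrix.transpose_smul, vecMulVec_transpose']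
  rw [ht]
  have expand : (1 - c • vecMulVec v v) * (1 - c • vecMulVec v v)
      = 1 - (2 * c) • vecMulVec v v + (c * c * (v ⬝ᵥ v)) • vecMulVec v v := by
    simp only [Matrix.sub_mul, Matrix.mul_sub, Matrix.one_mul, Matrix.mul_one,
      Matrix.smul_mul, Matrix.mul_smul, smul_smul, vecMulVec_mul_vecMulVec']
    module
  rw [expand]
  have hcc : c * c * (v ⬝ᵥ v) = 2 * c := by rw [hc]; field_simp
  rw [hcc]
  simp

lemma tr_max_exists {r : ℕ} (M : Matrix (Fin r) (Fin r) ℝ) :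
    ∃ R₀ : Matrix (Fin r) (Fin r) ℝ, R₀ᵀ * R₀ = 1 ∧
      ∀ R : Matrix (Fin r) (Fin r) ℝ, Rᵀ * R = 1 → (M * R).trace ≤ (M * R₀).trace := by
  classical
  set S : Set (Matrix (Fin r) (Fin r) ℝ) := {R | Rᵀ * R = 1} with hS
  have hne : S.Nonempty := ⟨1, by simp [hS]⟩
  have hclosed : IsClosed S := by
    have hc : Continuous fun R : Matrix (Fin r) (Fin r) ℝ => Rᵀ * R :=
      (continuous_id.matrix_transpose).matrix_mul continuous_id
    exact isClosed_eq hc continuous_const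
  have hbdd : Bornology.IsBounded S := by
    apply (Metric.isBounded_iff_subset_closedBall 0).mpr
    refine ⟨1, fun R hR => ?_⟩
    simp only [Metric.mem_closedBall, dist_zero_right]
    rw [Matrix.norm_le_iff (by norm_num : (0:ℝ) ≤ 1)]
    intro i j
    have h1 : (Rᵀ * R) j j = 1 := by rw [hR]; simp
    have h2 : ∑ k, R k j * R k j = 1 := by
      simpa [Matrix.mul_apply] using h1
    have h3 : R i j * R i j ≤ 1 := by
      rw [← h2]
      exact Finset.single_le_sum (fun k _ => mul_self_nonneg (R k j)) (Finset.mem_univ i)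
    rw [Real.norm_eq_abs]
    nlinarith [abs_nonneg (R i j), sq_abs (R i j)]
  have hcompact : IsCompact S := Metric.isCompact_of_isClosed_isBounded hclosed hbdd
  have hcont : Continuous fun R : Matrix (Fin r) (Fin r) ℝ => (M * R).trace :=
    (continuous_const.matrix_mul continuous_id).matrix_trace
  obtain ⟨R₀, hR₀S, hmax⟩ := hcompact.exists_isMaxOn hne hcont.continuousOn
  exact ⟨R₀, hR₀S, fun R hR => hmax hR⟩

lemma dotProduct_self_pos' {r : ℕ} {v : Fin r → ℝ} (hv : v ≠ 0) : 0 < v ⬝ᵥ v := by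
  rcases (Finset.sum_nonneg fun i (_ : i ∈ Finset.univ) => mul_self_nonneg (v i)).lt_or_eq
    with h | h
  · exact h
  · exact absurd (dotProduct_self_eq_zero.mp h.symm) hv

lemma psd_of_trace_max {r : ℕ} (N : Matrix (Fin r) (Fin r) ℝ)
    (h : ∀ Q : Matrix (Fin r) (Fin r) ℝ, Qᵀ * Q = 1 → (N * Q).trace ≤ N.trace) :
    N.PosSemidef := by
  have hform : ∀ v : Fin r → ℝ, 0 ≤ v ⬝ᵥ (N *ᵥ v) := by
    intro v
    rcases eq_or_ne v 0 with rfl | hv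
    · simp
    · have hvv := dotProduct_self_pos' hv
      have htr := h _ (householder_orth v hv)
      rw [Matrix.mul_sub, Matrix.mul_one, Matrix.mul_smul, Matrix.trace_sub, Matrix.trace_smul,
        trace_mul_vecMulVec'] at htr
      have h0 : 0 ≤ 2 * (v ⬝ᵥ v)⁻¹ * (v ⬝ᵥ (N *ᵥ v)) := by
        simpa using sub_nonneg.mpr htr
      nlinarith [inv_pos.mpr hvv]
  have htwo : ∀ u v : Fin r → ℝ, u ≠ 0 →
      0 ≤ (v ⬝ᵥ v) * (u ⬝ᵥ (N *ᵥ u)) + (u ⬝ᵥ u) * (v ⬝ᵥ (N *ᵥ v))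
        - 2 * (u ⬝ᵥ v) * (v ⬝ᵥ (N *ᵥ u)) := by
    intro u v hu
    rcases eq_or_ne v 0 with rfl | hv
    · simp
    · have huu := dotProduct_self_pos' hu
      have hvv := dotProduct_self_pos' hv
      set Qu := 1 - (2 * (u ⬝ᵥ u)⁻¹) • vecMulVec u u with hQu
      set Qv := 1 - (2 * (v ⬝ᵥ v)⁻¹) • vecMulVec v v with hQv
      have horth : (Qu * Qv)ᵀ * (Qu * Qv) = 1 := by
        rw [Matrix.transpose_mul, Matrix.mul_assoc, ← Matrix.mul_assoc Quᵀ,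
          householder_orth u hu, Matrix.one_mul, householder_orth v hv]
      have htr := h _ horth
      have expand : N * (Qu * Qv) = N - (2 * (u ⬝ᵥ u)⁻¹) • (N * vecMulVec u u)
          - (2 * (v ⬝ᵥ v)⁻¹) • (N * vecMulVec v v)
          + ((2 * (u ⬝ᵥ u)⁻¹) * ((2 * (v ⬝ᵥ v)⁻¹) * (u ⬝ᵥ v))) • (N * vecMulVec u v) := by
        rw [hQu, hQv]
        simp only [Matrix.mul_sub, Matrix.sub_mul, Matrix.mul_one, Matrix.one_mul,
          Matrix.smul_mul, Matrix.mul_smul, smul_smul, Matrix.mul_assoc,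
          vecMulVec_mul_vecMulVec']
        module
      rw [expand, Matrix.trace_add, Matrix.trace_sub, Matrix.trace_sub, Matrix.trace_smul,
        Matrix.trace_smul, Matrix.trace_smul, trace_mul_vecMulVec', trace_mul_vecMulVec',
        trace_mul_vecMulVec'] at htr
      have hE : 0 ≤ 2 * (u ⬝ᵥ u)⁻¹ * (u ⬝ᵥ (N *ᵥ u)) + 2 * (v ⬝ᵥ v)⁻¹ * (v ⬝ᵥ (N *ᵥ v))
          - (2 * (u ⬝ᵥ u)⁻¹) * ((2 * (v ⬝ᵥ v)⁻¹) * (u ⬝ᵥ v)) * (v ⬝ᵥ (N *ᵥ u)) := by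
        simp only [smul_eq_mul] at htr
        linarith
      have key : (v ⬝ᵥ v) * (u ⬝ᵥ (N *ᵥ u)) + (u ⬝ᵥ u) * (v ⬝ᵥ (N *ᵥ v))
          - 2 * (u ⬝ᵥ v) * (v ⬝ᵥ (N *ᵥ u))
          = ((u ⬝ᵥ u) * (v ⬝ᵥ v) / 2) * (2 * (u ⬝ᵥ u)⁻¹ * (u ⬝ᵥ (N *ᵥ u))
            + 2 * (v ⬝ᵥ v)⁻¹ * (v ⬝ᵥ (N *ᵥ v))
            - (2 * (u ⬝ᵥ u)⁻¹) * ((2 * (v ⬝ᵥ v)⁻¹) * (u ⬝ᵥ v)) * (v ⬝ᵥ (N *ᵥ u))) := by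
        field_simp
      rw [key]
      exact mul_nonneg (by positivity) hE
  have hsym : ∀ u w : Fin r → ℝ, u ⬝ᵥ (N *ᵥ w) = w ⬝ᵥ (N *ᵥ u) := by
    intro u w
    rcases eq_or_ne u 0 with rfl | hu
    · simp
    · have huu := dotProduct_self_pos' hu
      set α := (u ⬝ᵥ u) * ((u ⬝ᵥ (N *ᵥ w)) - (w ⬝ᵥ (N *ᵥ u))) with hα
      set β := (w ⬝ᵥ w) * (u ⬝ᵥ (N *ᵥ u)) + (u ⬝ᵥ u) * (w ⬝ᵥ (N *ᵥ w))
          - 2 * (u ⬝ᵥ w) * (w ⬝ᵥ (N *ᵥ u)) with hβ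
      have key : ∀ t : ℝ, 0 ≤ β * t ^ 2 + α * t := by
        intro t
        have h2 := htwo u (u + t • w) hu
        simp only [dotProduct_add, add_dotProduct, dotProduct_smul, smul_dotProduct,
          mulVec_add, mulVec_smul, smul_eq_mul, hα, hβ] at h2 ⊢
        have hc : w ⬝ᵥ u = u ⬝ᵥ w := dotProduct_comm w u
        rw [hc] at h2
        nlinarith [h2]
      have hβnn : 0 ≤ β := by have h1 := key 1; have h2 := key (-1); nlinarith
      have hA : α = 0 := by
        rcases hβnn.lt_or_eq with hβpos | hβ0
        · have hk := key (-α / (2 * β))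
          have hβne : β ≠ 0 := ne_of_gt hβpos
          have h4 : α ^ 2 ≤ 0 := by
            have e : β * (-α / (2 * β)) ^ 2 + α * (-α / (2 * β)) = -α ^ 2 / (4 * β) := by
              field_simp; ring
            rw [e, le_div_iff₀ (by positivity : (0:ℝ) < 4 * β)] at hk
            nlinarith
          nlinarith [sq_nonneg α]
        · have h1 := key 1; have h2 := key (-1); nlinarith
      rcases mul_eq_zero.mp hA with h' | h'
      · exact absurd h' (ne_of_gt huu)
      · linarith [sub_eq_zero.mp h']
  refine Matrix.PosSemidef.of_dotProduct_mulVec_nonneg ?_ ?_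
  · rw [Matrix.IsHermitian, conjTranspose_eq_transpose_of_trivial]
    ext i j
    rw [Matrix.transpose_apply]
    have := hsym (Pi.single i 1) (Pi.single j 1)
    simpa [Matrix.mulVec_single, single_dotProduct] using this.symm
  · intro x
    simpa using hform x

lemma exists_orth_psd {r : ℕ} (M : Matrix (Fin r) (Fin r) ℝ) :
    ∃ R : Matrix (Fin r) (Fin r) ℝ, Rᵀ * R = 1 ∧ (M * R).PosSemidef := by
  obtain ⟨R₀, hR₀, hmax⟩ := tr_max_exists M
  refine ⟨R₀, hR₀, psd_of_trace_max _ fun Q hQ => ?_⟩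
  have horth : (R₀ * Q)ᵀ * (R₀ * Q) = 1 := by
    rw [Matrix.transpose_mul, Matrix.mul_assoc, ← Matrix.mul_assoc R₀ᵀ, hR₀, Matrix.one_mul, hQ]
  have := hmax (R₀ * Q) horth
  rwa [← Matrix.mul_assoc] at this

lemma shifted_psd {n r : ℕ} (W : Matrix (Fin n) (Fin r) ℝ) (s : ℝ)
    (hs : ∀ i, s ≤ (Matrix.isHermitian_conjTranspose_mul_self W).eigenvalues i) :
    (Wᵀ * W - s • 1).PosSemidef := by
  have hG := Matrix.isHermitian_conjTranspose_mul_self W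
  have hst := hG.spectral_theorem
  set U : Matrix (Fin r) (Fin r) ℝ := ↑(hG.eigenvectorUnitary) with hU
  have hUU : U * star U = 1 := Matrix.mem_unitaryGroup_iff.mp hG.eigenvectorUnitary.2
  have hofReal : (RCLike.ofReal ∘ hG.eigenvalues : Fin r → ℝ) = hG.eigenvalues := by
    funext i; simp
  have h1 : diagonal (fun i => hG.eigenvalues i - s) = diagonal hG.eigenvalues - s • 1 := by
    ext i j
    by_cases hij : i = j
    · subst hij; simp [Matrix.diagonal_apply, Matrix.one_apply]
    · simp [Matrix.diagonal_apply, Matrix.one_apply, hij]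
  have hst' : Wᵀ * W = U * diagonal hG.eigenvalues * star U := by
    rw [hofReal] at hst
    rw [← Matrix.conjTranspose_eq_transpose_of_trivial]
    exact hst
  have key : U * (diagonal (fun i => hG.eigenvalues i - s)) * star U = Wᵀ * W - s • 1 := by
    rw [h1, Matrix.mul_sub, Matrix.sub_mul, Matrix.mul_smul, Matrix.mul_one, Matrix.smul_mul,
      hUU, ← hst']
  rw [← key]
  have hd : (diagonal (fun i => hG.eigenvalues i - s)).PosSemidef :=
    Matrix.posSemidef_diagonal_iff.mpr (fun i => sub_nonneg.mpr (hs i))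
  have := hd.mul_mul_conjTranspose_same U
  rwa [Matrix.star_eq_conjTranspose] at *

lemma scalar_key (a h g2 t2 : ℝ) (ha : 0 ≤ a) (hh : 0 ≤ h) (hg : 0 ≤ g2) (ht : 0 ≤ t2)
    (hth : t2 ≤ a + h) (hC : a - h ≤ Real.sqrt g2 * Real.sqrt t2) :
    (12 - 8 * Real.sqrt 2) * a ≤ a + h + g2 / 2 - t2 / 2 := by
  have hs2 : Real.sqrt 2 ^ 2 = 2 := Real.sq_sqrt (by norm_num)
  have hs2' : (1.4 : ℝ) ≤ Real.sqrt 2 := by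
    nlinarith [Real.sqrt_nonneg 2, hs2]
  set g := Real.sqrt g2 with hgdef
  set t := Real.sqrt t2 with htdef
  have hg2 : g ^ 2 = g2 := Real.sq_sqrt hg
  have ht2 : t ^ 2 = t2 := Real.sq_sqrt ht
  have hgn : 0 ≤ g := Real.sqrt_nonneg _
  have htn : 0 ≤ t := Real.sqrt_nonneg _
  set s := Real.sqrt (a + h) with hsdef
  have hs2ah : s ^ 2 = a + h := Real.sq_sqrt (by linarith)
  have hsn : 0 ≤ s := Real.sqrt_nonneg _
  have hts : t ≤ s := by
    rw [htdef, hsdef]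
    exact Real.sqrt_le_sqrt hth
  have h2 : a - h ≤ g * s := by nlinarith
  have h3 : g * s ≤ g ^ 2 + s ^ 2 / 4 := by nlinarith [sq_nonneg (g - s / 2)]
  have h4 : a ≤ (5 / 3) * h + (4 / 3) * g2 := by nlinarith
  nlinarith [mul_le_mul_of_nonneg_right hs2' ha]

lemma tr4 {n r : ℕ} (X Y : Matrix (Fin n) (Fin r) ℝ) :
    (X * Xᵀ * (Y * Yᵀ)).trace = (Xᵀ * Y * (Yᵀ * X)).trace := by
  rw [Matrix.trace_mul_cycle X Xᵀ (Y * Yᵀ), Matrix.mul_assoc Y Yᵀ X,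
    Matrix.trace_mul_cycle Y (Yᵀ * X) Xᵀ]

lemma key_identity {n r : ℕ} (A B : Matrix (Fin n) (Fin r) ℝ) (hP : (Aᵀ * B)ᵀ = Aᵀ * B) :
    ((A * Aᵀ - B * Bᵀ)ᵀ * (A * Aᵀ - B * Bᵀ)).trace
      = ((Aᵀ * A) * ((A - B)ᵀ * (A - B))).trace + ((Bᵀ * B) * ((A - B)ᵀ * (A - B))).trace
        + ((Aᵀ * A - Bᵀ * B)ᵀ * (Aᵀ * A - Bᵀ * B)).trace / 2
        - (((A - B)ᵀ * (A - B))ᵀ * ((A - B)ᵀ * (A - B))).trace / 2 := by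
  have hBA : Bᵀ * A = Aᵀ * B := by rw [← hP, Matrix.transpose_mul, Matrix.transpose_transpose]
  simp only [Matrix.transpose_sub, Matrix.transpose_mul, Matrix.transpose_transpose,
    Matrix.mul_sub, Matrix.sub_mul, Matrix.trace_sub, hBA]
  have e1 := tr4 A A
  have e2 := tr4 B A
  have e3 := tr4 A B
  have e4 := tr4 B B
  rw [hBA] at e2 e3
  have e5 : (Bᵀ * B * (Aᵀ * A)).trace = (Aᵀ * A * (Bᵀ * B)).trace :=
    Matrix.trace_mul_comm _ _
  have e6 : (Aᵀ * B * (Aᵀ * A)).trace = (Aᵀ * A * (Aᵀ * B)).trace :=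
    Matrix.trace_mul_comm _ _
  have e7 : (Aᵀ * B * (Bᵀ * B)).trace = (Bᵀ * B * (Aᵀ * B)).trace :=
    Matrix.trace_mul_comm _ _
  rw [e1, e2, e3, e4, e5, e6, e7]
  ring

end AuxLemmas

theorem stmt12 {n r : ℕ} (W₁ W₂ : Matrix (Fin n) (Fin r) ℝ) (hrank : W₁.rank = r) :
    2 * (Real.sqrt 2 - 1) * (⨅ i, singularValues W₁ i) * distO W₁ W₂
      ≤ frobNorm (W₁ * W₁ᵀ - W₂ * W₂ᵀ) := by
  classical
  have hs2 : Real.sqrt 2 ^ 2 = 2 := Real.sq_sqrt (by norm_num)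
  have hs2' : (1.4 : ℝ) ≤ Real.sqrt 2 := by nlinarith [Real.sqrt_nonneg 2, hs2]
  have hc0 : (0:ℝ) ≤ 2 * (Real.sqrt 2 - 1) := by nlinarith
  set σ : ℝ := ⨅ i, singularValues W₁ i with hσ
  have hσ0 : 0 ≤ σ := Real.iInf_nonneg (fun i => Real.sqrt_nonneg _)
  obtain ⟨R, hR, hPSD⟩ := exists_orth_psd (W₁ᵀ * W₂)
  set B := W₂ * R with hB
  -- distance bounded by this particular rotation
  have hdist : distO W₁ W₂ ≤ frobNorm (W₁ - B) := by
    apply csInf_le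
    · refine ⟨0, fun d hd => ?_⟩
      obtain ⟨R', _, rfl⟩ := hd
      exact Real.sqrt_nonneg _
    · exact ⟨R, hR, rfl⟩
  -- notation
  have hPmat : W₁ᵀ * B = (W₁ᵀ * W₂) * R := by rw [hB, Matrix.mul_assoc]
  have hP : (W₁ᵀ * B).PosSemidef := by rw [hPmat]; exact hPSD
  have hPt : (W₁ᵀ * B)ᵀ = W₁ᵀ * B := by
    have := hP.1
    rwa [Matrix.IsHermitian, conjTranspose_eq_transpose_of_trivial] at this
  have hBBt : B * Bᵀ = W₂ * W₂ᵀ := by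
    have hRR : R * Rᵀ = 1 := mul_eq_one_comm.mp hR
    rw [hB, Matrix.transpose_mul, Matrix.mul_assoc, ← Matrix.mul_assoc R, hRR, Matrix.one_mul]
  -- PSD facts
  have hGpsd : (W₁ᵀ * W₁).PosSemidef := by
    have := Matrix.posSemidef_conjTranspose_mul_self W₁
    rwa [Matrix.conjTranspose_eq_transpose_of_trivial] at this
  have hHpsd : (Bᵀ * B).PosSemidef := by
    have := Matrix.posSemidef_conjTranspose_mul_self B
    rwa [Matrix.conjTranspose_eq_transpose_of_trivial] at this
  have hTpsd : ((W₁ - B)ᵀ * (W₁ - B)).PosSemidef := by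
    have := Matrix.posSemidef_conjTranspose_mul_self (W₁ - B)
    rwa [Matrix.conjTranspose_eq_transpose_of_trivial] at this
  have hTt : ((W₁ - B)ᵀ * (W₁ - B))ᵀ = (W₁ - B)ᵀ * (W₁ - B) := by
    rw [Matrix.transpose_mul, Matrix.transpose_transpose]
  -- eigenvalue bound
  have hGs : (W₁ᵀ * W₁ - σ ^ 2 • 1).PosSemidef := by
    apply shifted_psd
    intro i
    have hbdd : BddBelow (Set.range fun i => singularValues W₁ i) := by
      refine ⟨0, ?_⟩
      rintro x ⟨i, rfl⟩
      exact Real.sqrt_nonneg _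
    have h1 : σ ≤ singularValues W₁ i := ciInf_le hbdd i
    have h2 : 0 ≤ (Matrix.isHermitian_conjTranspose_mul_self W₁).eigenvalues i :=
      hGpsd.eigenvalues_nonneg i
    have h3 : singularValues W₁ i ^ 2 = (Matrix.isHermitian_conjTranspose_mul_self W₁).eigenvalues i :=
      Real.sq_sqrt h2
    nlinarith [Real.sqrt_nonneg ((Matrix.isHermitian_conjTranspose_mul_self W₁).eigenvalues i)]
  -- abbreviations for scalars
  set a : ℝ := ((W₁ᵀ * W₁) * ((W₁ - B)ᵀ * (W₁ - B))).trace with hadef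
  set h : ℝ := ((Bᵀ * B) * ((W₁ - B)ᵀ * (W₁ - B))).trace with hhdef
  set g2 : ℝ := ((W₁ᵀ * W₁ - Bᵀ * B)ᵀ * (W₁ᵀ * W₁ - Bᵀ * B)).trace with hg2def
  set t2 : ℝ := (((W₁ - B)ᵀ * (W₁ - B))ᵀ * ((W₁ - B)ᵀ * (W₁ - B))).trace with ht2def
  have ha : 0 ≤ a := psd_trace_nonneg hGpsd hTpsd
  have hh : 0 ≤ h := psd_trace_nonneg hHpsd hTpsd
  have hg2 : 0 ≤ g2 := tr_tmul_nonneg _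
  have ht2 : 0 ≤ t2 := tr_tmul_nonneg _
  have htrT : 0 ≤ ((W₁ - B)ᵀ * (W₁ - B)).trace := tr_tmul_nonneg _
  -- T = G + H - P - Pᵀ
  have hTexp : (W₁ - B)ᵀ * (W₁ - B)
      = W₁ᵀ * W₁ + Bᵀ * B - (W₁ᵀ * B) - (W₁ᵀ * B) := by
    have hBW : Bᵀ * W₁ = W₁ᵀ * B := by
      conv_rhs => rw [← hPt, Matrix.transpose_mul, Matrix.transpose_transpose]
    rw [Matrix.transpose_sub, Matrix.sub_mul, Matrix.mul_sub, Matrix.mul_sub, hBW]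
    abel
  -- t2 ≤ a + h
  have hth : t2 ≤ a + h := by
    have hTP : 0 ≤ (((W₁ - B)ᵀ * (W₁ - B)) * (W₁ᵀ * B)).trace :=
      psd_trace_nonneg hTpsd hP
    have e : t2 = (((W₁ - B)ᵀ * (W₁ - B)) * (W₁ᵀ * W₁)).trace
        + (((W₁ - B)ᵀ * (W₁ - B)) * (Bᵀ * B)).trace
        - 2 * (((W₁ - B)ᵀ * (W₁ - B)) * (W₁ᵀ * B)).trace := by
      rw [ht2def, hTt]
      nth_rewrite 2 [hTexp]
      rw [Matrix.mul_sub, Matrix.mul_sub, Matrix.mul_add, Matrix.trace_sub, Matrix.trace_sub,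
        Matrix.trace_add]
      ring
    have c1 : (((W₁ - B)ᵀ * (W₁ - B)) * (W₁ᵀ * W₁)).trace = a :=
      Matrix.trace_mul_comm _ _
    have c2 : (((W₁ - B)ᵀ * (W₁ - B)) * (Bᵀ * B)).trace = h :=
      Matrix.trace_mul_comm _ _
    rw [e, c1, c2]
    linarith
  -- Cauchy-Schwarz
  have hGt : (W₁ᵀ * W₁)ᵀ = W₁ᵀ * W₁ := by
    rw [Matrix.transpose_mul, Matrix.transpose_transpose]
  have hHt : (Bᵀ * B)ᵀ = Bᵀ * B := by
    conv_lhs => rw [Matrix.transpose_mul, Matrix.transpose_transpose]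
  have hCS : a - h ≤ Real.sqrt g2 * Real.sqrt t2 := by
    have hcs := tr_CS (W₁ᵀ * W₁ - Bᵀ * B) ((W₁ - B)ᵀ * (W₁ - B))
    rw [Matrix.transpose_sub, hGt, hHt, Matrix.sub_mul, Matrix.trace_sub] at hcs
    have e2 : ((W₁ᵀ * W₁ - Bᵀ * B) * (W₁ᵀ * W₁ - Bᵀ * B)).trace = g2 := by
      rw [hg2def, Matrix.transpose_sub, hGt, hHt]
    rw [e2, ← ht2def] at hcs
    exact hcs
  have hkey := scalar_key a h g2 t2 ha hh hg2 ht2 hth hCS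
  have hid := key_identity W₁ B hPt
  have hta : σ ^ 2 * ((W₁ - B)ᵀ * (W₁ - B)).trace ≤ a := by
    have h0 := psd_trace_nonneg hGs hTpsd
    rw [Matrix.sub_mul, Matrix.trace_sub, Matrix.smul_mul, Matrix.trace_smul,
      Matrix.one_mul] at h0
    simp only [smul_eq_mul] at h0
    linarith
  have h12 : (0:ℝ) ≤ 12 - 8 * Real.sqrt 2 := by nlinarith
  have hDD : (12 - 8 * Real.sqrt 2) * (σ ^ 2 * ((W₁ - B)ᵀ * (W₁ - B)).trace)
      ≤ ((W₁ * W₁ᵀ - B * Bᵀ)ᵀ * (W₁ * W₁ᵀ - B * Bᵀ)).trace := by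
    rw [hid]
    calc (12 - 8 * Real.sqrt 2) * (σ ^ 2 * ((W₁ - B)ᵀ * (W₁ - B)).trace)
        ≤ (12 - 8 * Real.sqrt 2) * a := mul_le_mul_of_nonneg_left hta h12
      _ ≤ _ := hkey
  -- final chain
  rw [← hBBt]
  have hexp : (2 * (Real.sqrt 2 - 1) * σ) ^ 2 = (12 - 8 * Real.sqrt 2) * σ ^ 2 := by
    linear_combination (4 * σ ^ 2) * hs2
  calc 2 * (Real.sqrt 2 - 1) * σ * distO W₁ W₂
      ≤ 2 * (Real.sqrt 2 - 1) * σ * frobNorm (W₁ - B) :=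
        mul_le_mul_of_nonneg_left hdist (mul_nonneg hc0 hσ0)
    _ = Real.sqrt ((2 * (Real.sqrt 2 - 1) * σ) ^ 2 * ((W₁ - B)ᵀ * (W₁ - B)).trace) := by
        rw [show frobNorm (W₁ - B) = Real.sqrt (((W₁ - B)ᵀ * (W₁ - B)).trace) from rfl,
          Real.sqrt_mul (by positivity), Real.sqrt_sq (mul_nonneg hc0 hσ0)]
    _ ≤ Real.sqrt (((W₁ * W₁ᵀ - B * Bᵀ)ᵀ * (W₁ * W₁ᵀ - B * Bᵀ)).trace) := by
        apply Real.sqrt_le_sqrt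
        calc (2 * (Real.sqrt 2 - 1) * σ) ^ 2 * ((W₁ - B)ᵀ * (W₁ - B)).trace
            = (12 - 8 * Real.sqrt 2) * (σ ^ 2 * ((W₁ - B)ᵀ * (W₁ - B)).trace) := by
              rw [hexp]; ring
          _ ≤ _ := hDD
    _ = frobNorm (W₁ * W₁ᵀ - B * Bᵀ) := rfl
end
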